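/- Let n, d be positive integers and S ⊆ ℝⁿ. Then the closure of the truncated moment cone M_{2d}(S) in the dual space of ℝ[X₁,…,Xₙ]_{2d} (with its unique vector space topology) equals P_{2d}(S)*. -/

import Mathlib

open MvPolynomial MeasureTheory

noncomputable section

set_option synthInstance.maxHeartbeats 1000000
set_option maxHeartbeats 1000000

/-- The space `ℝ[X₁,…,Xₙ]_m` of polynomials of total degree at most `m`. -/
def PolyLE (n m : ℕ) : Submodule ℝ (MvPolynomial (Fin n) ℝ) :=
  MvPolynomial.restrictTotalDegree (Fin n) ℝ m

/-- The cone `P_m(S)` of polynomials of degree at most `m` nonnegative on `S`. -/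
def Pcone (n m : ℕ) (S : Set (Fin n → ℝ)) : Set (PolyLE n m) :=
  {p | ∀ x ∈ S, 0 ≤ eval x (p : MvPolynomial (Fin n) ℝ)}

/-- The dual cone `P_m(S)*`. -/
def PconeDual (n m : ℕ) (S : Set (Fin n → ℝ)) : Set (Module.Dual ℝ (PolyLE n m)) :=
  {L | ∀ p ∈ Pcone n m S, 0 ≤ L p}

/-- `μ` has support contained in `S`. -/
def SupportIn {α : Type*} [TopologicalSpace α] [MeasurableSpace α]
    (μ : Measure α) (S : Set α) : Prop :=
  ∀ x ∉ S, ∃ U : Set α, IsOpen U ∧ x ∈ U ∧ μ U = 0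

/-- The truncated moment cone `M_m(S)`. -/
def MomentCone (n m : ℕ) (S : Set (Fin n → ℝ)) : Set (Module.Dual ℝ (PolyLE n m)) :=
  {L | ∃ μ : Measure (Fin n → ℝ), SupportIn μ S ∧
    (∀ p : MvPolynomial (Fin n) ℝ, p.totalDegree ≤ m → Integrable (fun x => eval x p) μ) ∧
    ∀ p : PolyLE n m, L p = ∫ x, eval x (p : MvPolynomial (Fin n) ℝ) ∂μ}

/-- The unique vector space topology on the finite-dimensional dual of `ℝ[X₁,…,Xₙ]_m`,
realized as the topology of pointwise convergence. -/
instance dualTop (n m : ℕ) : TopologicalSpace (Module.Dual ℝ (PolyLE n m)) :=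
  TopologicalSpace.induced (fun L => (⇑L : PolyLE n m → ℝ)) Pi.topologicalSpace

/-! ### Auxiliary material -/

instance (n m : ℕ) : Module.Finite ℝ (PolyLE n m) :=
  inferInstanceAs (Module.Finite ℝ (MvPolynomial.restrictTotalDegree (Fin n) ℝ m))

/-- Dimension of `PolyLE n m`. -/
abbrev NN (n m : ℕ) := Module.finrank ℝ (PolyLE n m)

/-- Euclidean model of the dual space. -/
abbrev EE (n m : ℕ) := EuclideanSpace ℝ (Fin (NN n m))

/-- A basis of `PolyLE n m`. -/
def bb (n m : ℕ) : Module.Basis (Fin (NN n m)) ℝ (PolyLE n m) := Module.finBasis ℝ (PolyLE n m)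

/-- The coordinate identification of the dual space with Euclidean space. -/
def Phi (n m : ℕ) : Module.Dual ℝ (PolyLE n m) ≃ₗ[ℝ] EE n m :=
  ((bb n m).dualBasis.equivFun).trans (WithLp.linearEquiv 2 ℝ (Fin (NN n m) → ℝ)).symm

/-- The coordinate identification of `PolyLE n m` with Euclidean space. -/
def Psi (n m : ℕ) : PolyLE n m ≃ₗ[ℝ] EE n m :=
  ((bb n m).equivFun).trans (WithLp.linearEquiv 2 ℝ (Fin (NN n m) → ℝ)).symm

lemma Phi_apply (n m : ℕ) (L : Module.Dual ℝ (PolyLE n m)) (i : Fin (NN n m)) :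
    Phi n m L i = L (bb n m i) := by
  simp [Phi, Module.Basis.equivFun_apply]

lemma Psi_apply (n m : ℕ) (p : PolyLE n m) (i : Fin (NN n m)) :
    Psi n m p i = (bb n m).repr p i := by
  simp [Psi, Module.Basis.equivFun_apply]

lemma pairing (n m : ℕ) (L : Module.Dual ℝ (PolyLE n m)) (p : PolyLE n m) :
    L p = ∑ i, (bb n m).repr p i * Phi n m L i := by
  conv_lhs => rw [← (bb n m).sum_repr p]
  rw [map_sum]
  simp only [map_smul, smul_eq_mul, Phi_apply]

lemma inner_ee (n m : ℕ) (x y : EE n m) : (inner ℝ x y : ℝ) = ∑ i, x i * y i := by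
  simp [PiLp.inner_apply, RCLike.inner_apply, starRingEnd_apply, mul_comm]

lemma pairing_inner (n m : ℕ) (L : Module.Dual ℝ (PolyLE n m)) (p : PolyLE n m) :
    (inner ℝ (Psi n m p) (Phi n m L) : ℝ) = L p := by
  rw [inner_ee, pairing n m L p]
  exact Finset.sum_congr rfl fun i _ => by rw [Psi_apply]

lemma continuous_coeFn (n m : ℕ) :
    Continuous (fun L : Module.Dual ℝ (PolyLE n m) => (⇑L : PolyLE n m → ℝ)) :=
  continuous_induced_dom

lemma continuous_Phi (n m : ℕ) : Continuous (Phi n m) := by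
  have h1 : Continuous (fun L : Module.Dual ℝ (PolyLE n m) =>
      (fun i => L (bb n m i) : Fin (NN n m) → ℝ)) := by
    refine continuous_pi fun i => ?_
    exact (continuous_apply ((bb n m) i)).comp (continuous_coeFn n m)
  have h2 : Continuous ((WithLp.equiv 2 (Fin (NN n m) → ℝ)).symm) :=
    PiLp.continuous_toLp 2 _
  refine (h2.comp h1).congr fun L => ?_
  show (WithLp.equiv 2 (Fin (NN n m) → ℝ)).symm (fun i => L (bb n m i)) = Phi n m L
  apply (WithLp.equiv 2 (Fin (NN n m) → ℝ)).injective
  funext i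
  simp only [Equiv.apply_symm_apply]
  exact (Phi_apply n m L i).symm

lemma continuous_Phi_symm (n m : ℕ) : Continuous (Phi n m).symm := by
  rw [continuous_induced_rng]
  refine continuous_pi fun p => ?_
  have hc : Continuous (fun v : EE n m =>
      ∑ i, (bb n m).repr p i * (WithLp.equiv 2 (Fin (NN n m) → ℝ)) v i) := by
    refine continuous_finset_sum _ fun i _ => ?_
    exact continuous_const.mul ((continuous_apply i).comp (PiLp.continuous_ofLp 2 _))
  refine hc.congr fun v => ?_
  show (∑ i, (bb n m).repr p i * (WithLp.equiv 2 (Fin (NN n m) → ℝ)) v i)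
      = ((Phi n m).symm v) p
  rw [pairing n m ((Phi n m).symm v) p]
  simp only [LinearEquiv.apply_symm_apply]
  rfl

/-- `Phi` as a homeomorphism. -/
def PhiH (n m : ℕ) : Module.Dual ℝ (PolyLE n m) ≃ₜ EE n m where
  toEquiv := (Phi n m).toEquiv
  continuous_toFun := continuous_Phi n m
  continuous_invFun := continuous_Phi_symm n m

/-- Evaluation at a point as linear functional on `PolyLE n m`. -/
def evalL (n m : ℕ) (x : Fin n → ℝ) : Module.Dual ℝ (PolyLE n m) :=
  (MvPolynomial.aeval x).toLinearMap.comp (Submodule.subtype _)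

lemma evalL_apply (n m : ℕ) (x : Fin n → ℝ) (p : PolyLE n m) :
    evalL n m x p = eval x (p : MvPolynomial (Fin n) ℝ) := by
  simp only [evalL, LinearMap.comp_apply, Submodule.subtype_apply, AlgHom.toLinearMap_apply]
  rw [aeval_def, eval, coe_eval₂Hom, Algebra.algebraMap_self]

lemma supportIn_ae {α : Type*} [TopologicalSpace α] [MeasurableSpace α]
    [SecondCountableTopology α] [OpensMeasurableSpace α]
    {μ : Measure α} {S : Set α} (h : SupportIn μ S) : ∀ᵐ x ∂μ, x ∈ S := by
  choose U hUo hxU hU0 using h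
  set N : Set α := ⋃ x : {x // x ∉ S}, U x x.2 with hN
  obtain ⟨T, hTc, hTeq⟩ := TopologicalSpace.isOpen_iUnion_countable
    (fun x : {x // x ∉ S} => U x x.2) (fun x => hUo x x.2)
  have hN0 : μ N = 0 := by
    rw [hN, ← hTeq]
    exact (measure_biUnion_null_iff hTc).2 fun x _ => hU0 x x.2
  have hsub : Sᶜ ⊆ N := fun x hx => Set.mem_iUnion.2 ⟨⟨x, hx⟩, hxU x hx⟩
  exact measure_mono_null hsub hN0

lemma zero_mem_moment (n m : ℕ) (S : Set (Fin n → ℝ)) :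
    (0 : Module.Dual ℝ (PolyLE n m)) ∈ MomentCone n m S := by
  refine ⟨0, fun x _ => ⟨Set.univ, isOpen_univ, trivial, rfl⟩,
    fun p _ => integrable_zero_measure, fun p => by simp⟩

lemma eval_continuous' (n : ℕ) (p : MvPolynomial (Fin n) ℝ) :
    Continuous fun x : Fin n → ℝ => eval x p :=
  MvPolynomial.continuous_eval p

lemma dirac_mem_moment (n m : ℕ) (S : Set (Fin n → ℝ)) {x : Fin n → ℝ} (hx : x ∈ S) :
    evalL n m x ∈ MomentCone n m S := by
  refine ⟨Measure.dirac x, ?_, ?_, ?_⟩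
  · intro y hy
    refine ⟨{x}ᶜ, isClosed_singleton.isOpen_compl, fun h => hy (h ▸ hx), ?_⟩
    rw [Measure.dirac_apply' _ (MeasurableSet.singleton x).compl]
    simp
  · intro p _
    have hm : Measurable fun y : Fin n → ℝ => eval y p := (eval_continuous' n p).measurable
    refine ⟨(eval_continuous' n p).aestronglyMeasurable, ?_⟩
    rw [HasFiniteIntegral, lintegral_dirac' _ hm.enorm]
    exact ENNReal.coe_lt_top
  · intro p
    rw [integral_dirac, evalL_apply]

lemma moment_nonneg {n m : ℕ} {S : Set (Fin n → ℝ)} {L : Module.Dual ℝ (PolyLE n m)}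
    (hL : L ∈ MomentCone n m S) {p : PolyLE n m} (hp : p ∈ Pcone n m S) : 0 ≤ L p := by
  obtain ⟨μ, hsupp, hint, hrep⟩ := hL
  rw [hrep]
  refine integral_nonneg_of_ae ?_
  filter_upwards [supportIn_ae hsupp] with x hx
  exact hp x hx

lemma add_mem_moment {n m : ℕ} {S : Set (Fin n → ℝ)} {L₁ L₂ : Module.Dual ℝ (PolyLE n m)}
    (h₁ : L₁ ∈ MomentCone n m S) (h₂ : L₂ ∈ MomentCone n m S) : L₁ + L₂ ∈ MomentCone n m S := by
  obtain ⟨μ₁, hs₁, hi₁, hr₁⟩ := h₁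
  obtain ⟨μ₂, hs₂, hi₂, hr₂⟩ := h₂
  refine ⟨μ₁ + μ₂, ?_, ?_, ?_⟩
  · intro x hx
    obtain ⟨U₁, hU₁o, hxU₁, hU₁0⟩ := hs₁ x hx
    obtain ⟨U₂, hU₂o, hxU₂, hU₂0⟩ := hs₂ x hx
    refine ⟨U₁ ∩ U₂, hU₁o.inter hU₂o, ⟨hxU₁, hxU₂⟩, ?_⟩
    simp only [Measure.add_apply]
    rw [measure_mono_null Set.inter_subset_left hU₁0,
      measure_mono_null Set.inter_subset_right hU₂0, add_zero]
  · intro p hp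
    exact integrable_add_measure.2 ⟨hi₁ p hp, hi₂ p hp⟩
  · intro p
    have hdp : (p : MvPolynomial (Fin n) ℝ).totalDegree ≤ m :=
      (MvPolynomial.mem_restrictTotalDegree _ _ _).1 p.2
    rw [LinearMap.add_apply, hr₁, hr₂, integral_add_measure (hi₁ _ hdp) (hi₂ _ hdp)]

lemma smul_mem_moment {n m : ℕ} {S : Set (Fin n → ℝ)} {L : Module.Dual ℝ (PolyLE n m)}
    (h : L ∈ MomentCone n m S) {c : ℝ} (hc : 0 < c) : c • L ∈ MomentCone n m S := by
  obtain ⟨μ, hs, hi, hr⟩ := h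
  refine ⟨ENNReal.ofReal c • μ, ?_, ?_, ?_⟩
  · intro x hx
    obtain ⟨U, hUo, hxU, hU0⟩ := hs x hx
    exact ⟨U, hUo, hxU, by simp [hU0]⟩
  · intro p hp
    exact (hi p hp).smul_measure ENNReal.ofReal_ne_top
  · intro p
    rw [LinearMap.smul_apply, hr, integral_smul_measure, ENNReal.toReal_ofReal hc.le]

/-- The image of the moment cone in Euclidean space, as a convex cone. -/
def coneA (n m : ℕ) (S : Set (Fin n → ℝ)) : ConvexCone ℝ (EE n m) where
  carrier := Phi n m '' MomentCone n m S
  smul_mem' := by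
    rintro c hc _ ⟨L, hL, rfl⟩
    exact ⟨c • L, smul_mem_moment hL hc, map_smul _ _ _⟩
  add_mem' := by
    rintro _ ⟨L₁, h₁, rfl⟩ _ ⟨L₂, h₂, rfl⟩
    exact ⟨L₁ + L₂, add_mem_moment h₁ h₂, map_add _ _ _⟩

/-- Auxiliary general statement with `m` in place of `2 * d`. -/
theorem momclo_general (n m : ℕ) (S : Set (Fin n → ℝ)) :
    closure (MomentCone n m S) = PconeDual n m S := by
  classical
  set A : Set (EE n m) := Phi n m '' MomentCone n m S with hA
  -- dual of A is Psi '' Pcone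
  have hdualA : (ProperCone.innerDual A : Set (EE n m)) = Psi n m '' Pcone n m S := by
    ext y
    constructor
    · intro hy
      refine ⟨(Psi n m).symm y, ?_, (Psi n m).apply_symm_apply y⟩
      intro x hx
      have hev : 0 ≤ (inner ℝ (Phi n m (evalL n m x)) y : ℝ) := hy ⟨_, dirac_mem_moment n m S hx, rfl⟩
      rw [real_inner_comm] at hev
      have : (inner ℝ (Psi n m ((Psi n m).symm y)) (Phi n m (evalL n m x)) : ℝ)
          = evalL n m x ((Psi n m).symm y) := pairing_inner n m _ _
      rw [(Psi n m).apply_symm_apply] at this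
      rw [this, evalL_apply] at hev
      exact hev
    · rintro ⟨p, hp, rfl⟩ a ⟨L, hL, rfl⟩
      show 0 ≤ (inner ℝ (Phi n m L) (Psi n m p) : ℝ)
      rw [real_inner_comm, pairing_inner]
      exact moment_nonneg hL hp
  -- dual of Psi '' Pcone is Phi '' PconeDual
  have hdualP : (ProperCone.innerDual (Psi n m '' Pcone n m S) : Set (EE n m))
      = Phi n m '' PconeDual n m S := by
    ext y
    constructor
    · intro hy
      refine ⟨(Phi n m).symm y, ?_, (Phi n m).apply_symm_apply y⟩
      intro p hp
      have : 0 ≤ (inner ℝ (Psi n m p) y : ℝ) := hy ⟨p, hp, rfl⟩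
      rwa [← (Phi n m).apply_symm_apply y, pairing_inner] at this
    · rintro ⟨L, hL, rfl⟩ _ ⟨p, hp, rfl⟩
      show 0 ≤ (inner ℝ (Psi n m p) (Phi n m L) : ℝ)
      rw [pairing_inner]
      exact hL p hp
  -- the inner dual cone of A equals that of its closure
  have hdual_closure : (ProperCone.innerDual (closure A) : Set (EE n m))
      = (ProperCone.innerDual A : Set (EE n m)) := by
    apply Set.Subset.antisymm
    · exact fun y hy x hx => hy (subset_closure hx)
    · intro y hy x hx
      have hinner : Continuous fun x : EE n m => (inner ℝ x y : ℝ) :=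
        continuous_id.inner continuous_const
      have hcl : IsClosed {x : EE n m | 0 ≤ (inner ℝ x y : ℝ)} :=
        isClosed_le continuous_const hinner
      exact closure_minimal (fun a ha => hy ha) hcl hx
  -- bipolar
  have hKne : ((coneA n m S).closure : Set (EE n m)).Nonempty :=
    ⟨Phi n m 0, subset_closure ⟨0, zero_mem_moment n m S, rfl⟩⟩
  have hKcl : IsClosed ((coneA n m S).closure : Set (EE n m)) := by
    rw [ConvexCone.coe_closure]; exact isClosed_closure
  have hbipolar : (ProperCone.innerDual (ProperCone.innerDual ((coneA n m S).closure : Set (EE n m))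
      : Set (EE n m)) : Set (EE n m)) = ((coneA n m S).closure : Set (EE n m)) := by
    have h0 : (coneA n m S).closure.Pointed := by
      show (0 : EE n m) ∈ ((coneA n m S).closure : Set (EE n m))
      rw [← map_zero (Phi n m), ConvexCone.coe_closure]
      exact subset_closure ⟨0, zero_mem_moment n m S, rfl⟩
    let C : ProperCone ℝ (EE n m) := ⟨(coneA n m S).closure.toPointedCone h0, hKcl⟩
    exact congrArg SetLike.coe (ProperCone.innerDual_innerDual C)
  have hKA : ((coneA n m S).closure : Set (EE n m)) = closure A := by
    rw [ConvexCone.coe_closure]; rfl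
  -- assemble in Euclidean space
  have key : Phi n m '' PconeDual n m S = closure A := by
    calc Phi n m '' PconeDual n m S
        = (ProperCone.innerDual (Psi n m '' Pcone n m S) : Set (EE n m)) := hdualP.symm
      _ = (ProperCone.innerDual (ProperCone.innerDual A : Set (EE n m)) : Set (EE n m)) := by rw [hdualA]
      _ = (ProperCone.innerDual (ProperCone.innerDual ((coneA n m S).closure : Set (EE n m)) : Set (EE n m))
            : Set (EE n m)) := by rw [hKA, hdual_closure]
      _ = ((coneA n m S).closure : Set (EE n m)) := by rw [hbipolar]
      _ = closure A := hKA
  -- pull back along the homeomorphism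
  have himg : Phi n m '' closure (MomentCone n m S) = closure A := by
    have := (PhiH n m).image_closure (MomentCone n m S)
    exact this
  have : Phi n m '' closure (MomentCone n m S) = Phi n m '' PconeDual n m S := by
    rw [himg, key]
  exact Set.image_injective.2 (Phi n m).injective this

/-- Proposition `momclo`: the closure of the truncated moment cone `M_{2d}(S)` in the dual
space of `ℝ[X₁,…,Xₙ]_{2d}` equals `P_{2d}(S)*`. -/
theorem stmt_5 (n d : ℕ) (hn : 0 < n) (hd : 0 < d) (S : Set (Fin n → ℝ)) :
    closure (MomentCone n (2 * d) S) = PconeDual n (2 * d) S :=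
  momclo_general n (2 * d) S

end
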